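/- Let E be a real finite-dimensional Euclidean space and f : E → ℝ be continuous on some neighborhood of x ∈ E, Lipschitz on a neighborhood of x, and l-stable at x. If the lower Dini directional derivatives satisfy f'_D(x;h) = 0 and f''_D(x;h) > 0 for every h ∈ E with h ≠ 0, then x is an isolated local minimizer of order 2 for f. -/

import Mathlib

open Filter Topology

/-- The lower Dini directional derivative
`f'_D(x;u) = liminf_{t↓0} (f(x+tu) − f(x))/t`, valued in `EReal`. -/
noncomputable def diniD1 {E : Type*} [NormedAddCommGroup E] [InnerProductSpace ℝ E]
    (f : E → ℝ) (x u : E) : EReal :=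
  Filter.liminf (fun t : ℝ => (((f (x + t • u) - f x) / t : ℝ) : EReal)) (𝓝[>] (0 : ℝ))

/-- `f` is `l`-stable at `x`: there are a neighborhood `U` of `x` and a constant `K > 0`
such that the lower Dini derivatives `f'_D(y;u)`, `f'_D(x;u)` are finite and satisfy
`|f'_D(y;u) − f'_D(x;u)| ≤ K‖y−x‖‖u‖` for all `y ∈ U`, `u ∈ E`. -/
def LStableAt {E : Type*} [NormedAddCommGroup E] [InnerProductSpace ℝ E]
    (f : E → ℝ) (x : E) : Prop :=
  ∃ U ∈ 𝓝 x, ∃ K : ℝ, 0 < K ∧ ∀ y ∈ U, ∀ u : E,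
    ∃ dy dx : ℝ, diniD1 f y u = (dy : EReal) ∧ diniD1 f x u = (dx : EReal) ∧
      |dy - dx| ≤ K * ‖y - x‖ * ‖u‖

/-- The second-order lower Dini directional derivative relative to the (real) value `d`
of the first-order lower Dini derivative:
`f''_D(x;u) = liminf_{t↓0} 2(f(x+tu) − f(x) − t·d)/t²` where `d = f'_D(x;u)`. -/
noncomputable def diniD2 {E : Type*} [NormedAddCommGroup E] [InnerProductSpace ℝ E]
    (f : E → ℝ) (x u : E) (d : ℝ) : EReal :=
  Filter.liminf
    (fun t : ℝ => ((2 * (f (x + t • u) - f x - t * d) / t ^ 2 : ℝ) : EReal)) (𝓝[>] (0 : ℝ))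

open Set
private lemma map_nhdsGT (s : ℝ) : Filter.map (fun t : ℝ => s + t) (𝓝[>] (0:ℝ)) = 𝓝[>] s := by
  have h := (Homeomorph.addLeft s).isEmbedding.map_nhdsWithin_eq (Set.Ioi (0:ℝ)) 0
  simpa [image_const_add_Ioi] using h

private lemma mvt_dini {g : ℝ → ℝ} {m : ℝ} (hg : ContinuousOn g (Set.Icc 0 1))
    (hd : ∀ s ∈ Set.Ico (0:ℝ) 1, ∀ r : ℝ, r < m →
      ∀ᶠ t in 𝓝[>] (0:ℝ), r < (g (s + t) - g s) / t) :
    g 0 + m ≤ g 1 := by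
  have key := image_le_of_liminf_slope_right_le_deriv_boundary
    (f := fun s => -g s) (a := 0) (b := 1)
    (B := fun s => -g 0 + (-m) * s) (B' := fun _ => -m)
    hg.neg (by simp) (by fun_prop)
    (fun s _ => by
      simpa using (((hasDerivAt_id s).const_mul (-m)).const_add (-g 0)).hasDerivWithinAt)
    ?_
  · have := key (x := 1) (by norm_num)
    simp only [mul_one] at this
    linarith
  · intro s hs r hr
    have hrm : -r < m := by linarith [neg_lt.mpr hr]
    have hev := hd s hs (-r) hrm
    have hev2 : ∀ᶠ t in 𝓝[>] (0:ℝ), slope (fun y => -g y) s (s + t) < r := by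
      filter_upwards [hev, eventually_mem_nhdsWithin] with t ht ht0
      have htp : (0:ℝ) < t := ht0
      rw [slope_def_field]
      have : ((-g (s + t)) - (-g s)) / (s + t - s) = -((g (s + t) - g s) / t) := by
        rw [add_sub_cancel_left]; ring
      rw [this]; linarith
    have : ∀ᶠ z in 𝓝[>] s, slope (fun y => -g y) s z < r := by
      rw [← map_nhdsGT s, eventually_map]; exact hev2
    exact this.frequently

private lemma key_estimate {E : Type*} [NormedAddCommGroup E] [InnerProductSpace ℝ E]
    (f : E → ℝ) (x : E) {U : Set E} (hfc : ContinuousOn f U) {K : ℝ} (hK : 0 < K)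
    (hs : ∀ y ∈ U, ∀ u : E, ∃ dy dx : ℝ, diniD1 f y u = (dy : EReal) ∧
      diniD1 f x u = (dx : EReal) ∧ |dy - dx| ≤ K * ‖y - x‖ * ‖u‖)
    (hd1 : ∀ u : E, u ≠ 0 → diniD1 f x u = 0)
    (z v : E) (hseg : ∀ s ∈ Set.Icc (0:ℝ) 1, z + s • v ∈ U) :
    f z - K * (‖z - x‖ + ‖v‖) * ‖v‖ ≤ f (z + v) := by
  rcases eq_or_ne v 0 with rfl | hv
  · simp
  · set m : ℝ := -(K * (‖z - x‖ + ‖v‖) * ‖v‖) with hm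
    set g : ℝ → ℝ := fun s => f (z + s • v) with hg
    have hgc : ContinuousOn g (Set.Icc 0 1) := by
      apply hfc.comp
      · exact (continuous_const.add (continuous_id.smul continuous_const)).continuousOn
      · intro s hsmem; exact hseg s hsmem
    have hmain := mvt_dini (m := m) hgc ?_
    · have h0 : g 0 = f z := by simp [hg]
      have h1 : g 1 = f (z + v) := by simp [hg]
      rw [h0, h1] at hmain
      linarith
    · intro s hsIco r hr
      have hsIcc : s ∈ Set.Icc (0:ℝ) 1 := Ico_subset_Icc_self hsIco
      obtain ⟨dy, dx, hdy, hdx, hb⟩ := hs (z + s • v) (hseg s hsIcc) v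
      have hdx0 : dx = 0 := by
        rw [hd1 v hv] at hdx
        exact_mod_cast hdx.symm
      rw [hdx0, sub_zero] at hb
      have hnorm : ‖z + s • v - x‖ ≤ ‖z - x‖ + ‖v‖ := by
        have : z + s • v - x = (z - x) + s • v := by abel
        rw [this]
        refine (norm_add_le _ _).trans ?_
        gcongr
        rw [norm_smul, Real.norm_eq_abs, abs_of_nonneg hsIcc.1]
        nlinarith [hsIcc.2, norm_nonneg v]
      have hmdy : m ≤ dy := by
        have h1 : -(K * ‖z + s • v - x‖ * ‖v‖) ≤ dy := (abs_le.1 hb).1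
        have h2 : K * ‖z + s • v - x‖ * ‖v‖ ≤ K * (‖z - x‖ + ‖v‖) * ‖v‖ := by
          gcongr
        rw [hm]; linarith
      have hrd : ((r : ℝ) : EReal) < diniD1 f (z + s • v) v := by
        rw [hdy]
        exact_mod_cast lt_of_lt_of_le hr hmdy
      have hev := eventually_lt_of_lt_liminf hrd
      filter_upwards [hev] with t ht
      have : r < (f (z + s • v + t • v) - f (z + s • v)) / t := by exact_mod_cast ht
      have heq : z + (s + t) • v = z + s • v + t • v := by
        rw [add_smul]; abel
      rw [hg]
      simpa [heq] using this


set_option maxHeartbeats 1000000 in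
/-- Let `f : E → ℝ` be continuous on some neighborhood of `x`, Lipschitz
on a neighborhood of `x`, and `l`-stable at `x`. If `f'_D(x;h) = 0` and `f''_D(x;h) > 0`
for every `h ≠ 0`, then `x` is an isolated local minimizer of order `2` for `f`. -/
theorem lstable_dini_sufficient_isolated_min
    {E : Type*} [NormedAddCommGroup E] [InnerProductSpace ℝ E] [FiniteDimensional ℝ E]
    (f : E → ℝ) (x : E)
    (hcont : ∃ U ∈ 𝓝 x, ContinuousOn f U)
    (hlip : ∃ U ∈ 𝓝 x, ∃ K : NNReal, LipschitzOnWith K f U)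
    (hstab : LStableAt f x)
    (h : ∀ u : E, u ≠ 0 → diniD1 f x u = 0 ∧ 0 < diniD2 f x u 0) :
    ∃ C : ℝ, 0 < C ∧ ∃ N ∈ 𝓝 x, ∀ y ∈ N, y ≠ x → f x + C * ‖y - x‖ ^ 2 < f y := by
  obtain ⟨U, hU, hfc⟩ := hcont
  obtain ⟨V, hV, K, hK, hsV⟩ := hstab
  set W := U ∩ V with hW
  have hWn : W ∈ 𝓝 x := inter_mem hU hV
  obtain ⟨ε, hε, hball⟩ := Metric.mem_nhds_iff.1 hWn
  have hfcW : ContinuousOn f W := hfc.mono inter_subset_left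
  have hsW : ∀ y ∈ W, ∀ u : E, ∃ dy dx : ℝ, diniD1 f y u = (dy : EReal) ∧
      diniD1 f x u = (dx : EReal) ∧ |dy - dx| ≤ K * ‖y - x‖ * ‖u‖ :=
    fun y hy u => hsV y hy.2 u
  by_contra hcon
  push_neg at hcon
  -- extract the sequence
  have H : ∀ n : ℕ, ∃ y, y ∈ Metric.ball x (min (ε/4) (1/(n+1))) ∧ y ≠ x ∧
      f y ≤ f x + (1/(n+1)) * ‖y - x‖ ^ 2 := by
    intro n
    have hCpos : (0:ℝ) < 1/(n+1) := by positivity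
    have hNn : Metric.ball x (min (ε/4) (1/(n+1))) ∈ 𝓝 x :=
      Metric.ball_mem_nhds x (lt_min (by linarith) hCpos)
    obtain ⟨y, hy1, hy2, hy3⟩ := hcon (1/(n+1)) hCpos _ hNn
    exact ⟨y, hy1, hy2, hy3⟩
  choose y hyball hyne hyle using H
  set t : ℕ → ℝ := fun n => ‖y n - x‖ with ht
  have htpos : ∀ n, 0 < t n := fun n => norm_pos_iff.2 (sub_ne_zero.2 (hyne n))
  have htlt : ∀ n, t n < min (ε/4) (1/(n+1)) := fun n => by
    have := hyball n
    rwa [Metric.mem_ball, dist_eq_norm] at this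
  set u : ℕ → E := fun n => (t n)⁻¹ • (y n - x) with hu
  have hunorm : ∀ n, ‖u n‖ = 1 := fun n => by
    rw [hu]
    simp only [norm_smul, norm_inv, Real.norm_eq_abs, abs_of_pos (htpos n)]
    exact inv_mul_cancel₀ (htpos n).ne'
  have husphere : ∀ n, u n ∈ Metric.sphere (0:E) 1 := fun n => by
    simp [hunorm n]
  obtain ⟨h0, h0mem, φ, hφ, hφtend⟩ :=
    (isCompact_sphere (0:E) 1).tendsto_subseq husphere
  have h0norm : ‖h0‖ = 1 := by simpa using h0mem
  have h0ne : h0 ≠ 0 := by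
    intro hc; rw [hc, norm_zero] at h0norm; norm_num at h0norm
  -- the positive second derivative gives c
  obtain ⟨c, hc0, hclt⟩ := EReal.exists_between_coe_real (h h0 h0ne).2
  have hcpos : (0:ℝ) < c := by exact_mod_cast hc0
  have hev := eventually_lt_of_lt_liminf hclt
  -- t (φ n) tends to 0 within Ioi 0
  have htendt : Tendsto (fun n => t (φ n)) atTop (𝓝[>] (0:ℝ)) := by
    rw [tendsto_nhdsWithin_iff]
    constructor
    · apply squeeze_zero (fun n => (htpos (φ n)).le)
        (fun n => ?_) tendsto_one_div_add_atTop_nhds_zero_nat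
      have h1 : t (φ n) < 1/(φ n + 1) := (htlt (φ n)).trans_le (min_le_right _ _)
      have h2 : (1:ℝ)/(φ n + 1) ≤ 1/(n + 1) := by
        apply one_div_le_one_div_of_le (by positivity)
        have hle : (n:ℝ) ≤ φ n := by exact_mod_cast hφ.le_apply
        linarith
      linarith
    · exact Eventually.of_forall fun n => htpos (φ n)
  have hevn := htendt.eventually hev
  -- norms tend to 0
  have hetend : Tendsto (fun n => ‖u (φ n) - h0‖) atTop (𝓝 0) := by
    rw [← tendsto_iff_norm_sub_tendsto_zero] at *
    exact hφtend
  have hCn : Tendsto (fun n : ℕ => (1:ℝ)/(φ n + 1)) atTop (𝓝 0) := by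
    apply squeeze_zero (fun n => by positivity) (fun n => ?_)
      tendsto_one_div_add_atTop_nhds_zero_nat
    apply one_div_le_one_div_of_le (by positivity)
    have hle : (n:ℝ) ≤ φ n := by exact_mod_cast hφ.le_apply
    linarith
  have hDtend : Tendsto (fun n => 3*K*‖u (φ n) - h0‖ + 1/(φ n + 1)) atTop (𝓝 0) := by
    have := ((hetend.const_mul (3*K)).add hCn)
    simpa [mul_assoc] using this
  have hDev : ∀ᶠ n in atTop, 3*K*‖u (φ n) - h0‖ + 1/(φ n + 1) < c/2 :=
    hDtend.eventually_lt_const (by linarith)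
  obtain ⟨n, h1n, h2n⟩ := (hevn.and hDev).exists
  -- notation
  set T := t (φ n) with hT
  set hn := u (φ n) with hhn
  set en := ‖hn - h0‖ with hen
  have hTpos : 0 < T := htpos (φ n)
  have hTeps : T < ε/4 := (htlt (φ n)).trans_le (min_le_left _ _)
  have hen2 : en ≤ 2 := by
    rw [hen]
    calc ‖hn - h0‖ ≤ ‖hn‖ + ‖h0‖ := norm_sub_le _ _
    _ = 2 := by rw [hunorm (φ n), h0norm]; norm_num
  have hen0 : 0 ≤ en := norm_nonneg _
  have hyeq : y (φ n) = x + T • hn := by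
    have : T • hn = y (φ n) - x := by
      rw [hhn, hu, smul_smul, mul_inv_cancel₀ hTpos.ne', one_smul]
    rw [this]; abel
  -- apply key_estimate with z = x + T • h0, v = T • (hn - h0)
  set z := x + T • h0 with hz
  set v := T • (hn - h0) with hv
  have hzv : z + v = y (φ n) := by
    rw [hz, hv, hyeq, smul_sub]; abel
  have hznorm : ‖z - x‖ = T := by
    rw [hz]
    simp [norm_smul, abs_of_pos hTpos, h0norm]
  have hvnorm : ‖v‖ = T * en := by
    rw [hv, norm_smul, Real.norm_eq_abs, abs_of_pos hTpos, hen]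
  have hseg : ∀ s ∈ Set.Icc (0:ℝ) 1, z + s • v ∈ W := by
    intro s hsmem
    apply hball
    rw [Metric.mem_ball, dist_eq_norm]
    have heq : z + s • v - x = T • h0 + s • v := by rw [hz]; abel
    rw [heq]
    have hn1 : ‖T • h0‖ = T := by
      rw [norm_smul, Real.norm_eq_abs, abs_of_pos hTpos, h0norm, mul_one]
    have hn2 : ‖s • v‖ = s * (T * en) := by
      rw [norm_smul, Real.norm_eq_abs, abs_of_nonneg hsmem.1, hvnorm]
    have hb2 : s * (T * en) ≤ 1 * (T * 2) := by
      nlinarith [mul_nonneg (sub_nonneg.2 hsmem.2) (mul_nonneg hTpos.le hen0),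
        mul_nonneg hTpos.le (sub_nonneg.2 hen2)]
    calc ‖T • h0 + s • v‖ ≤ ‖T • h0‖ + ‖s • v‖ := norm_add_le _ _
    _ = T + s * (T * en) := by rw [hn1, hn2]
    _ < ε := by nlinarith
  have hkey := key_estimate f x hfcW hK hsW (fun u hu => (h u hu).1) z v hseg
  rw [hznorm, hvnorm] at hkey
  -- lower bound on f z from hevn
  have h1n' : c < 2 * (f (x + T • h0) - f x - T * 0) / T ^ 2 := by exact_mod_cast h1n
  rw [← hz] at h1n'
  have hT2 : (0:ℝ) < T ^ 2 := by positivity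
  have hlow : c * T ^ 2 < 2 * (f z - f x) := by
    have := (lt_div_iff₀ hT2).1 h1n'
    linarith
  -- upper bound from the sequence
  have hup : f (y (φ n)) ≤ f x + (1/(φ n + 1)) * T ^ 2 := by
    have := hyle (φ n)
    simpa [← hT] using this
  rw [← hzv] at hup
  -- combine
  have hprod : K * (T + T * en) * (T * en) ≤ 3 * K * en * T ^ 2 := by
    nlinarith [mul_nonneg (mul_nonneg (mul_nonneg hK.le hT2.le) hen0) (sub_nonneg.2 hen2)]
  have h2n' : (3*K*en + 1/(φ n + 1)) * T ^ 2 < c/2 * T ^ 2 :=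
    mul_lt_mul_of_pos_right h2n hT2
  nlinarith [hlow, hkey, hup, hprod, h2n']
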